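/- Let α₁ ∈ ℝ, α₂ > 0, ε > 0 and β ≥ 0, and suppose α₁ > 2 + ε or α₁ < −(2 + ε). Then the polynomial Q has no purely imaginary roots, i.e., Q(iy) ≠ 0 for every real y. -/
import Mathlib


/-- The quartic `Q(z) = z⁴ + (4z/(β+ε))·[(2+ε)(z²+1) + (α₁ − iα₂)(z²−1)]
+ 2((16−β+3ε)/(β+ε))z² + 1`. -/
noncomputable def Q (a1 a2 e b : ℝ) (z : ℂ) : ℂ :=
  z ^ 4
    + (4 * z / ((b : ℂ) + (e : ℂ)))
        * (((2 : ℂ) + (e : ℂ)) * (z ^ 2 + 1) + ((a1 : ℂ) - Complex.I * (a2 : ℂ)) * (z ^ 2 - 1))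
    + 2 * (((16 : ℂ) - (b : ℂ) + 3 * (e : ℂ)) / ((b : ℂ) + (e : ℂ))) * z ^ 2 + 1

/-- For `α₂ > 0`, `ε > 0`, `β ≥ 0` and `α₁ > 2 + ε` or `α₁ < −(2 + ε)`, the polynomial
`Q` has no purely imaginary roots. -/
theorem stmt_11 (a1 a2 e b : ℝ) (ha2 : 0 < a2) (he : 0 < e) (hb : 0 ≤ b)
    (ha1 : 2 + e < a1 ∨ a1 < -(2 + e)) :
    ∀ y : ℝ, Q a1 a2 e b (Complex.I * (y : ℂ)) ≠ 0 := by
  intro y hQ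
  have hc : (0:ℝ) < b + e := by linarith
  have hc' : ((b:ℂ) + e) ≠ 0 := by
    rw [show ((b:ℂ) + e) = ((b + e : ℝ) : ℂ) by push_cast; ring]
    exact_mod_cast hc.ne'
  have h2 : ((b:ℂ)+e) * Q a1 a2 e b (Complex.I * y) = 0 := by rw [hQ]; ring
  rw [Q] at h2
  field_simp at h2
  have him := congrArg Complex.im h2
  have hre := congrArg Complex.re h2
  simp [Complex.ext_iff, Complex.add_im, Complex.mul_im, Complex.mul_re, pow_succ] at him hre
  rcases him with h0 | him
  · subst h0; simp at hre; linarith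
  · have hy2 : 0 ≤ y * y := mul_self_nonneg y
    rcases ha1 with h | h
    · nlinarith
    · nlinarith
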